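/- Let Y be finite and suppose the Bradley-Terry model holds: p*(y≻y') = σ(r(y)-r(y')). Then the maximizer of E_{y~π}E_{y'~μ}[Ψ(p*(y≻y'))] - τ·KL(π||π_ref) with Ψ(q)=log(q/(1-q)) coincides with the maximizer of E_{y~π}[r(y)] - τ·KL(π||π_ref), for any τ > 0 and full-support π_ref, μ. -/

import Mathlib

theorem stmt_15 {Y : Type*} [Fintype Y] [Nonempty Y]
    (r : Y → ℝ) (τ : ℝ) (hτ : 0 < τ)
    (μ πref : Y → ℝ)
    (hμ : ∀ y, 0 < μ y) (hμ1 : ∑ y, μ y = 1)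
    (href : ∀ y, 0 < πref y) (href1 : ∑ y, πref y = 1)
    (p : Y → Y → ℝ)
    (hp : ∀ y y', p y y' = 1 / (1 + Real.exp (-(r y - r y'))))
    (J₁ J₂ : (Y → ℝ) → ℝ)
    (hJ₁ : ∀ π, J₁ π = ∑ y, π y * (∑ y', μ y' * Real.log (p y y' / (1 - p y y')))
        - τ * ∑ y, π y * Real.log (π y / πref y))
    (hJ₂ : ∀ π, J₂ π = ∑ y, π y * r y - τ * ∑ y, π y * Real.log (π y / πref y))
    (π : Y → ℝ) (hπ0 : ∀ y, 0 ≤ π y) (hπ1 : ∑ y, π y = 1) :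
    (∀ π' : Y → ℝ, (∀ y, 0 ≤ π' y) → ∑ y, π' y = 1 → J₁ π' ≤ J₁ π) ↔
    (∀ π' : Y → ℝ, (∀ y, 0 ≤ π' y) → ∑ y, π' y = 1 → J₂ π' ≤ J₂ π) := by
  have hlog : ∀ y y' : Y, Real.log (p y y' / (1 - p y y')) = r y - r y' := by
    intro y y'
    rw [hp]
    set x := r y - r y' with hx
    have hpos : (0:ℝ) < 1 + Real.exp (-x) := by positivity
    have h1 : 1 - 1 / (1 + Real.exp (-x)) = Real.exp (-x) / (1 + Real.exp (-x)) := by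
      field_simp
      ring
    rw [h1]
    have h2 : 1 / (1 + Real.exp (-x)) / (Real.exp (-x) / (1 + Real.exp (-x)))
        = Real.exp x := by
      rw [div_div_div_cancel_right₀]
      rw [Real.exp_neg, one_div, inv_inv]
      exact hpos.ne'
    rw [h2, Real.log_exp]
  set c : ℝ := ∑ y', μ y' * r y' with hc
  have hinner : ∀ y : Y, (∑ y', μ y' * Real.log (p y y' / (1 - p y y'))) = r y - c := by
    intro y
    simp_rw [hlog, mul_sub]
    rw [Finset.sum_sub_distrib, ← Finset.sum_mul, hμ1, one_mul]
  have key : ∀ π' : Y → ℝ, ∑ y, π' y = 1 → J₁ π' = J₂ π' - c := by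
    intro π' h1
    rw [hJ₁, hJ₂]
    simp_rw [hinner, mul_sub]
    rw [Finset.sum_sub_distrib, ← Finset.sum_mul, h1, one_mul]
    ring
  constructor
  · intro h π' h0 h1
    have := h π' h0 h1
    rw [key π' h1, key π hπ1] at this
    linarith
  · intro h π' h0 h1
    have := h π' h0 h1
    rw [key π' h1, key π hπ1]
    linarith
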